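/- Let H be the subgroup of the symmetric group on {1,…,14} generated by (1,6,4)(2,12,3)(5,10,9)(8,13,11) and (1,12,6)(3,7,4)(5,13,8)(10,14,11). Then (i) H has a normal subgroup P whose order is a power of 7 such that the quotient H/P is cyclic, and (ii) the orbits of H on {1,…,14} are exactly the two 7-element sets {1,2,3,4,6,7,12} and {5,8,9,10,11,13,14}. -/

import Mathlib

set_option maxRecDepth 20000

attribute [local instance] Classical.propDecidable

/-- `H = ⟨(1,6,4)(2,12,3)(5,10,9)(8,13,11), (1,12,6)(3,7,4)(5,13,8)(10,14,11)⟩`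
(the subgroup `G₆¹⁰` of the paper). -/
def H : Subgroup (Equiv.Perm (Fin 14)) :=
  Subgroup.closure {c[1,6,4] * c[2,12,3] * c[5,10,9] * c[8,13,11],
    c[1,12,6] * c[3,7,4] * c[5,13,8] * c[10,14,11]}

/-- The orbit of a point `x` under a subgroup `G` of permutations, as a finite set. -/
noncomputable def orbitFinset (G : Subgroup (Equiv.Perm (Fin 14))) (x : Fin 14) :
    Finset (Fin 14) :=
  Finset.univ.filter fun y => ∃ σ ∈ G, σ x = y

/- Auxiliary definitions -/

private def A : Equiv.Perm (Fin 14) := c[1,6,4] * c[2,12,3] * c[5,10,9] * c[8,13,11]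
private def B : Equiv.Perm (Fin 14) := c[1,12,6] * c[3,7,4] * c[5,13,8] * c[10,14,11]
private def C : Equiv.Perm (Fin 14) := A * B⁻¹

private lemma H_eq : H = Subgroup.closure {A, B} := rfl

private lemma hA : A ∈ H := by rw [H_eq]; exact Subgroup.subset_closure (Set.mem_insert _ _)
private lemma hB : B ∈ H := by
  rw [H_eq]; exact Subgroup.subset_closure (Set.mem_insert_of_mem _ rfl)
private lemma hC : C ∈ H := mul_mem hA (inv_mem hB)

/-- The subgroup of permutations stabilizing a finite set `S` setwise. -/
private def stab (S : Finset (Fin 14)) : Subgroup (Equiv.Perm (Fin 14)) where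
  carrier := {σ | ∀ i, σ i ∈ S ↔ i ∈ S}
  one_mem' := by intro i; simp
  mul_mem' := by
    intro a b ha hb i
    simp only [Equiv.Perm.mul_apply]
    rw [ha, hb]
  inv_mem' := by
    intro a ha i
    have h := ha (a⁻¹ i)
    simpa using h.symm

private lemma mem_stab {S : Finset (Fin 14)} {σ : Equiv.Perm (Fin 14)} :
    σ ∈ stab S ↔ ∀ i, σ i ∈ S ↔ i ∈ S := Iff.rfl

private lemma H_le_stab1 : H ≤ stab ({1, 2, 3, 4, 6, 7, 12} : Finset (Fin 14)) := by
  rw [H_eq]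
  rw [Subgroup.closure_le]
  rintro σ (rfl | rfl) <;> rw [SetLike.mem_coe, mem_stab] <;> decide

private lemma mem_orbitFinset {G : Subgroup (Equiv.Perm (Fin 14))} {x y : Fin 14} :
    y ∈ orbitFinset G x ↔ ∃ σ ∈ G, σ x = y := by
  simp [orbitFinset]

private lemma orbitFinset_smul (G : Subgroup (Equiv.Perm (Fin 14)))
    {σ : Equiv.Perm (Fin 14)} (hσ : σ ∈ G) (x : Fin 14) :
    orbitFinset G (σ x) = orbitFinset G x := by
  ext y
  simp only [mem_orbitFinset]
  constructor
  · rintro ⟨τ, hτ, rfl⟩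
    exact ⟨τ * σ, mul_mem hτ hσ, rfl⟩
  · rintro ⟨τ, hτ, rfl⟩
    exact ⟨τ * σ⁻¹, mul_mem hτ (inv_mem hσ), by simp⟩

private lemma orbit1 : orbitFinset H 1 = ({1, 2, 3, 4, 6, 7, 12} : Finset (Fin 14)) := by
  ext y
  rw [mem_orbitFinset]
  constructor
  · rintro ⟨σ, hσ, rfl⟩
    exact ((H_le_stab1 hσ) 1).mpr (by decide)
  · intro hy
    simp only [Finset.mem_insert, Finset.mem_singleton] at hy
    rcases hy with rfl | rfl | rfl | rfl | rfl | rfl | rfl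
    · exact ⟨C ^ 0, pow_mem hC 0, by decide⟩
    · exact ⟨C ^ 3, pow_mem hC 3, by decide⟩
    · exact ⟨C ^ 6, pow_mem hC 6, by decide⟩
    · exact ⟨C ^ 1, pow_mem hC 1, by decide⟩
    · exact ⟨C ^ 5, pow_mem hC 5, by decide⟩
    · exact ⟨C ^ 2, pow_mem hC 2, by decide⟩
    · exact ⟨C ^ 4, pow_mem hC 4, by decide⟩

private lemma H_le_stab2 : H ≤ stab ({5, 8, 9, 10, 11, 13, 14} : Finset (Fin 14)) := by
  rw [H_eq]
  rw [Subgroup.closure_le]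
  rintro σ (rfl | rfl) <;> rw [SetLike.mem_coe, mem_stab] <;> decide

private lemma orbit2 : orbitFinset H 5 = ({5, 8, 9, 10, 11, 13, 14} : Finset (Fin 14)) := by
  ext y
  rw [mem_orbitFinset]
  constructor
  · rintro ⟨σ, hσ, rfl⟩
    exact ((H_le_stab2 hσ) 5).mpr (by decide)
  · intro hy
    simp only [Finset.mem_insert, Finset.mem_singleton] at hy
    rcases hy with rfl | rfl | rfl | rfl | rfl | rfl | rfl
    · exact ⟨C ^ 0, pow_mem hC 0, by decide⟩
    · exact ⟨C ^ 3, pow_mem hC 3, by decide⟩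
    · exact ⟨C ^ 6, pow_mem hC 6, by decide⟩
    · exact ⟨C ^ 2, pow_mem hC 2, by decide⟩
    · exact ⟨C ^ 4, pow_mem hC 4, by decide⟩
    · exact ⟨C ^ 1, pow_mem hC 1, by decide⟩
    · exact ⟨C ^ 5, pow_mem hC 5, by decide⟩

private lemma mem_normalizer_zpowers {G : Type*} [Group G] {g c : G}
    (h1 : g * c * g⁻¹ ∈ Subgroup.zpowers c) (h2 : g⁻¹ * c * g ∈ Subgroup.zpowers c) :
    g ∈ Subgroup.normalizer (Subgroup.zpowers c : Set G) := by
  rw [Subgroup.mem_normalizer_iff]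
  intro h
  constructor
  · intro hh
    obtain ⟨n, rfl⟩ := Subgroup.mem_zpowers_iff.mp hh
    have : g * c ^ n * g⁻¹ = (g * c * g⁻¹) ^ n := by
      simpa using (map_zpow (MulAut.conj g) c n).symm
    rw [this]
    exact Subgroup.zpow_mem _ h1 n
  · intro hh
    obtain ⟨n, hn⟩ := Subgroup.mem_zpowers_iff.mp hh
    have key : (g⁻¹ * c * g) ^ n = g⁻¹ * c ^ n * g := by
      simpa using (map_zpow (MulAut.conj g⁻¹) c n).symm
    have : h = (g⁻¹ * c * g) ^ n := by
      rw [key, hn]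
      simp [mul_assoc]
    rw [this]
    exact Subgroup.zpow_mem _ h2 n

private lemma zpowersC_le : Subgroup.zpowers C ≤ H := Subgroup.zpowers_le.mpr hC

private lemma H_le_normalizer : H ≤ Subgroup.normalizer (Subgroup.zpowers C : Set (Equiv.Perm (Fin 14))) := by
  rw [H_eq, Subgroup.closure_le]
  rintro σ (rfl | rfl)
  · exact mem_normalizer_zpowers ⟨2, by decide⟩ ⟨4, by decide⟩
  · exact mem_normalizer_zpowers ⟨2, by decide⟩ ⟨4, by decide⟩

/-- (i) `H` has a normal subgroup `P` of `7`-power order with cyclic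
quotient `H / P`, and (ii) the orbits of `H` on `{1,…,14}` are exactly the two `7`-element
sets `{1,2,3,4,6,7,12}` and `{5,8,9,10,11,13,14}`. -/
theorem H_Psi₇_and_two_orbits :
    (∃ P : Subgroup H, ∃ hP : P.Normal, (∃ m : ℕ, Nat.card P = 7 ^ m) ∧
      (letI := hP; IsCyclic (H ⧸ P))) ∧
    (∀ x : Fin 14,
        orbitFinset H x = ({1, 2, 3, 4, 6, 7, 12} : Finset (Fin 14)) ∨
        orbitFinset H x = ({5, 8, 9, 10, 11, 13, 14} : Finset (Fin 14))) ∧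
    (∃ x : Fin 14, orbitFinset H x = ({1, 2, 3, 4, 6, 7, 12} : Finset (Fin 14))) ∧
    (∃ x : Fin 14, orbitFinset H x = ({5, 8, 9, 10, 11, 13, 14} : Finset (Fin 14))) := by
  refine ⟨?_, ?_, ⟨1, orbit1⟩, ⟨5, orbit2⟩⟩
  · -- structural part
    refine ⟨(Subgroup.zpowers C).subgroupOf H, ?_, ?_, ?_⟩
    · -- normality
      rw [Subgroup.normal_subgroupOf_iff zpowersC_le]
      intro h k hh hk
      exact (Subgroup.mem_normalizer_iff.mp (H_le_normalizer hk) h).mp hh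
    · -- 7-power order
      refine ⟨1, ?_⟩
      have e := Subgroup.subgroupOfEquivOfLe zpowersC_le
      rw [Nat.card_congr e.toEquiv, Nat.card_zpowers]
      haveI : Fact (Nat.Prime 7) := ⟨by norm_num⟩
      rw [orderOf_eq_prime (by decide : C ^ 7 = 1) (by decide : C ≠ 1)]
      norm_num
    · -- cyclic quotient
      haveI : ((Subgroup.zpowers C).subgroupOf H).Normal := by
        rw [Subgroup.normal_subgroupOf_iff zpowersC_le]
        intro h k hh hk
        exact (Subgroup.mem_normalizer_iff.mp (H_le_normalizer hk) h).mp hh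
      set P := (Subgroup.zpowers C).subgroupOf H with hPdef
      have hCP : (⟨C, hC⟩ : H) ∈ P := Subgroup.mem_subgroupOf.mpr (Subgroup.mem_zpowers C)
      refine ⟨⟨(QuotientGroup.mk (⟨A, hA⟩ : H) : H ⧸ P), ?_⟩⟩
      intro x
      obtain ⟨⟨y, hy⟩, rfl⟩ := QuotientGroup.mk_surjective x
      have key : ∀ (y : Equiv.Perm (Fin 14)) (hy : y ∈ Subgroup.closure {A, B}),
          (QuotientGroup.mk (⟨y, hy⟩ : H) : H ⧸ P) ∈
            Subgroup.zpowers (QuotientGroup.mk (⟨A, hA⟩ : H) : H ⧸ P) := by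
        intro y hy
        induction hy using Subgroup.closure_induction with
        | mem z hz =>
          rcases hz with rfl | rfl
          · exact Subgroup.mem_zpowers _
          · have hBAC : (⟨B, hB⟩ : H) = ⟨A, hA⟩ * ⟨C, hC⟩ ^ 3 := by
              ext1
              show B = A * C ^ 3
              decide
            have : (QuotientGroup.mk (⟨B, hB⟩ : H) : H ⧸ P) =
                QuotientGroup.mk (⟨A, hA⟩ : H) := by
              rw [hBAC, QuotientGroup.mk_mul, QuotientGroup.mk_pow,
                (QuotientGroup.eq_one_iff _).mpr hCP]
              group
            show (QuotientGroup.mk (⟨B, hB⟩ : H) : H ⧸ P) ∈ _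
            rw [this]
            exact Subgroup.mem_zpowers _
        | one => exact one_mem _
        | mul a b ha hb iha ihb =>
          have : (QuotientGroup.mk (⟨a * b, mul_mem ha hb⟩ : H) : H ⧸ P) =
              QuotientGroup.mk (⟨a, ha⟩ : H) * QuotientGroup.mk (⟨b, hb⟩ : H) := rfl
          rw [this]
          exact mul_mem iha ihb
        | inv a ha iha =>
          have : (QuotientGroup.mk (⟨a⁻¹, inv_mem ha⟩ : H) : H ⧸ P) =
              (QuotientGroup.mk (⟨a, ha⟩ : H))⁻¹ := rfl
          rw [this]
          exact inv_mem iha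
      exact key y hy
  · -- orbits
    intro x
    have orb1_of : ∀ (x : Fin 14) (k : ℕ), (C ^ k) 1 = x →
        orbitFinset H x = ({1, 2, 3, 4, 6, 7, 12} : Finset (Fin 14)) := by
      intro x k h
      rw [← h, orbitFinset_smul H (pow_mem hC k), orbit1]
    have orb2_of : ∀ (x : Fin 14) (k : ℕ), (C ^ k) 5 = x →
        orbitFinset H x = ({5, 8, 9, 10, 11, 13, 14} : Finset (Fin 14)) := by
      intro x k h
      rw [← h, orbitFinset_smul H (pow_mem hC k), orbit2]
    fin_cases x
    · exact Or.inr (orb2_of _ 5 (by decide))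
    · exact Or.inl (orb1_of _ 0 (by decide))
    · exact Or.inl (orb1_of _ 3 (by decide))
    · exact Or.inl (orb1_of _ 6 (by decide))
    · exact Or.inl (orb1_of _ 1 (by decide))
    · exact Or.inr (orb2_of _ 0 (by decide))
    · exact Or.inl (orb1_of _ 5 (by decide))
    · exact Or.inl (orb1_of _ 2 (by decide))
    · exact Or.inr (orb2_of _ 3 (by decide))
    · exact Or.inr (orb2_of _ 6 (by decide))
    · exact Or.inr (orb2_of _ 2 (by decide))
    · exact Or.inr (orb2_of _ 4 (by decide))
    · exact Or.inl (orb1_of _ 4 (by decide))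
    · exact Or.inr (orb2_of _ 1 (by decide))
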